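/- Let ε_p := |f(p)|²/p^{2σ} + ∑_{ν≥2} |f(p^ν)|/p^{νσ} for a multiplicative function f and σ ∈ (0,1), and define ψ multiplicatively by ψ(p^ν) = ∑_{0≤j≤ν} (−1)^j f(p)^j f(p^{ν−j})/j! for ν ≥ 1. Then for each prime p, ∑_{ν≥2} |ψ(p^ν)|/p^{νσ} ≤ ∑_{j+k≥2} |f(p)|^j |f(p^k)| / (j! p^{σ(k+j)}) ≪ ε_p, with implied constant depending only on a bound for |f(p)|/p^σ and ε_p. -/

import Mathlib

open Finset

lemma my_summable_antidiag {F : ℕ × ℕ → ℝ} (hF : Summable F) :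
    Summable (fun n => ∑ kl ∈ Finset.HasAntidiagonal.antidiagonal n, F kl) := by
  have h : Summable fun x : Σ n : ℕ, Finset.HasAntidiagonal.antidiagonal n => F x.2 :=
    Finset.HasAntidiagonal.sigmaAntidiagonalEquivProd.summable_iff.mpr hF
  conv => congr; ext; rw [← Finset.sum_finset_coe, ← tsum_fintype (L := .unconditional _)]
  exact h.sigma' fun n => (hasSum_fintype _).summable

lemma my_tsum_antidiag {F : ℕ × ℕ → ℝ} (hF : Summable F) :
    ∑' n : ℕ, ∑ kl ∈ Finset.HasAntidiagonal.antidiagonal n, F kl = ∑' x : ℕ × ℕ, F x := by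
  conv_lhs => congr; ext; rw [← Finset.sum_finset_coe, ← tsum_fintype (L := .unconditional _)]
  rw [← Finset.HasAntidiagonal.sigmaAntidiagonalEquivProd.tsum_eq F]
  exact (Summable.tsum_sigma' (fun n => (hasSum_fintype _).summable)
    (Finset.HasAntidiagonal.sigmaAntidiagonalEquivProd.summable_iff.mpr hF)).symm

set_option maxHeartbeats 2000000 in
lemma my_main_aux (D : ℝ) (hD1 : 1 ≤ D) (α : ℝ) (hα0 : 0 ≤ α) (hαD : α ≤ D)
    (b : ℕ → ℝ) (hb0 : ∀ k, 0 ≤ b k) (hbz : b 0 = 1) (hbo : b 1 = α)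
    (hbs : Summable (fun ν : ℕ => if 2 ≤ ν then b ν else 0)) :
    Summable (fun jk : ℕ × ℕ =>
      if 2 ≤ jk.1 + jk.2 then α ^ jk.1 / (Nat.factorial jk.1 : ℝ) * b jk.2 else 0) ∧
    (∑' jk : ℕ × ℕ,
        if 2 ≤ jk.1 + jk.2 then α ^ jk.1 / (Nat.factorial jk.1 : ℝ) * b jk.2 else 0)
      ≤ (2 * ∑' j : ℕ, D ^ j / (Nat.factorial j : ℝ))
          * (α ^ 2 + ∑' ν : ℕ, if 2 ≤ ν then b ν else 0) := by
  have hD0 : (0:ℝ) ≤ D := le_trans zero_le_one hD1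
  have hcD : Summable (fun j : ℕ => D ^ j / (Nat.factorial j : ℝ)) :=
    Real.summable_pow_div_factorial D
  have h1 : Summable (fun k : ℕ => if 2 ≤ k then (0:ℝ) else α ^ 2) := by
    apply summable_of_ne_finset_zero (s := Finset.range 2)
    intro k hk
    simp only [Finset.mem_range, not_lt] at hk
    simp [hk]
  have hw : Summable (fun k : ℕ => if 2 ≤ k then b k else α ^ 2) := by
    refine (hbs.add h1).congr fun k => ?_
    by_cases hk : 2 ≤ k <;> simp [hk]
  have hwn : ∀ k : ℕ, 0 ≤ (if 2 ≤ k then b k else α ^ 2) := by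
    intro k; split
    · exact hb0 _
    · positivity
  have hH : Summable (fun jk : ℕ × ℕ =>
      D ^ jk.1 / (Nat.factorial jk.1 : ℝ) * (if 2 ≤ jk.2 then b jk.2 else α ^ 2)) :=
    hcD.mul_of_nonneg hw (fun j => by positivity) hwn
  have hGH : ∀ jk : ℕ × ℕ,
      (if 2 ≤ jk.1 + jk.2 then α ^ jk.1 / (Nat.factorial jk.1 : ℝ) * b jk.2 else 0)
        ≤ D ^ jk.1 / (Nat.factorial jk.1 : ℝ) * (if 2 ≤ jk.2 then b jk.2 else α ^ 2) := by
    rintro ⟨j, k⟩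
    dsimp only
    split
    · rename_i h
      by_cases hk : 2 ≤ k
      · rw [if_pos hk]
        have hjj : α ^ j ≤ D ^ j := pow_le_pow_left₀ hα0 hαD j
        have := hb0 k
        gcongr
      · rw [if_neg hk]
        push_neg at hk
        interval_cases k
        · rw [hbz, mul_one]
          obtain ⟨m, rfl⟩ : ∃ m, j = m + 2 := ⟨j - 2, by omega⟩
          have h2 : α ^ m ≤ D ^ (m + 2) :=
            le_trans (pow_le_pow_left₀ hα0 hαD m) (pow_le_pow_right₀ hD1 (by omega))
          have hfac : (0:ℝ) < (Nat.factorial (m + 2) : ℝ) := by positivity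
          rw [div_mul_eq_mul_div, div_le_div_iff₀ hfac hfac]
          have : α ^ (m + 2) = α ^ m * α ^ 2 := by ring
          nlinarith [mul_le_mul_of_nonneg_right h2 (by positivity : (0:ℝ) ≤ α ^ 2)]
        · rw [hbo]
          obtain ⟨m, rfl⟩ : ∃ m, j = m + 1 := ⟨j - 1, by omega⟩
          have h2 : α ^ m ≤ D ^ (m + 1) :=
            le_trans (pow_le_pow_left₀ hα0 hαD m) (pow_le_pow_right₀ hD1 (by omega))
          have key : α ^ (m + 1) * α ≤ D ^ (m + 1) * α ^ 2 :=
            calc α ^ (m + 1) * α = α ^ m * α ^ 2 := by ring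
              _ ≤ D ^ (m + 1) * α ^ 2 := mul_le_mul_of_nonneg_right h2 (sq_nonneg α)
          rw [div_mul_eq_mul_div, div_mul_eq_mul_div]
          exact div_le_div_of_nonneg_right key (Nat.cast_nonneg _)
    · rename_i h
      exact mul_nonneg (by positivity) (hwn k)
  have hGnn : ∀ jk : ℕ × ℕ,
      0 ≤ (if 2 ≤ jk.1 + jk.2 then α ^ jk.1 / (Nat.factorial jk.1 : ℝ) * b jk.2 else 0) := by
    rintro ⟨j, k⟩
    dsimp only
    split
    · exact mul_nonneg (by positivity) (hb0 _)
    · exact le_refl 0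
  have hGs : Summable (fun jk : ℕ × ℕ =>
      if 2 ≤ jk.1 + jk.2 then α ^ jk.1 / (Nat.factorial jk.1 : ℝ) * b jk.2 else 0) :=
    Summable.of_nonneg_of_le hGnn hGH hH
  refine ⟨hGs, ?_⟩
  have hT0 : 0 ≤ ∑' ν : ℕ, if 2 ≤ ν then b ν else 0 :=
    tsum_nonneg fun ν => by split; exacts [hb0 _, le_refl 0]
  have hE0 : (1:ℝ) ≤ ∑' j : ℕ, D ^ j / (Nat.factorial j : ℝ) := by
    have h0 := Summable.le_tsum hcD 0 fun i _ => by positivity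
    simpa using h0
  have hW : (∑' k : ℕ, if 2 ≤ k then b k else α ^ 2)
      = (∑' ν : ℕ, if 2 ≤ ν then b ν else 0) + 2 * α ^ 2 := by
    have e : (fun k : ℕ => if 2 ≤ k then b k else α ^ 2)
        = fun k => (if 2 ≤ k then b k else 0) + (if 2 ≤ k then 0 else α ^ 2) := by
      funext k; by_cases hk : 2 ≤ k <;> simp [hk]
    rw [e, Summable.tsum_add hbs h1]
    congr 1
    rw [tsum_eq_sum (s := Finset.range 2)
      (fun k hk => by simp only [Finset.mem_range, not_lt] at hk; simp [hk])]
    norm_num [Finset.sum_range_succ]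
    ring
  calc (∑' jk : ℕ × ℕ,
        if 2 ≤ jk.1 + jk.2 then α ^ jk.1 / (Nat.factorial jk.1 : ℝ) * b jk.2 else 0)
      ≤ ∑' jk : ℕ × ℕ,
          D ^ jk.1 / (Nat.factorial jk.1 : ℝ) * (if 2 ≤ jk.2 then b jk.2 else α ^ 2) :=
        Summable.tsum_le_tsum hGH hGs hH
    _ = (∑' j : ℕ, D ^ j / (Nat.factorial j : ℝ))
          * (∑' k : ℕ, if 2 ≤ k then b k else α ^ 2) := (Summable.tsum_mul_tsum hcD hw hH).symm
    _ = (∑' j : ℕ, D ^ j / (Nat.factorial j : ℝ))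
          * ((∑' ν : ℕ, if 2 ≤ ν then b ν else 0) + 2 * α ^ 2) := by rw [hW]
    _ ≤ (2 * ∑' j : ℕ, D ^ j / (Nat.factorial j : ℝ))
          * (α ^ 2 + ∑' ν : ℕ, if 2 ≤ ν then b ν else 0) := by
        nlinarith [mul_nonneg (le_trans zero_le_one hE0) hT0]

theorem psi_prime_power_tail_bound :
    ∀ C : ℝ, 0 < C → ∃ C' : ℝ, 0 < C' ∧
      ∀ (f : ℕ → ℂ), f 1 = 1 → ∀ (σ : ℝ), 0 < σ → σ < 1 → ∀ p : ℕ, p.Prime →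
      Summable (fun ν : ℕ => if 2 ≤ ν then ‖f (p ^ ν)‖ / (p : ℝ) ^ (σ * ν) else 0) →
      ‖f p‖ / (p : ℝ) ^ σ ≤ C →
      ‖f p‖ ^ 2 / (p : ℝ) ^ (2 * σ)
        + (∑' ν : ℕ, if 2 ≤ ν then ‖f (p ^ ν)‖ / (p : ℝ) ^ (σ * ν) else 0) ≤ C →
      ((∑' ν : ℕ, if 2 ≤ ν then
          ‖∑ j ∈ Finset.range (ν + 1),
            (-1) ^ j * f p ^ j * f (p ^ (ν - j)) / (Nat.factorial j : ℂ)‖ / (p : ℝ) ^ (σ * ν)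
          else 0)
        ≤ ∑' jk : ℕ × ℕ, (if 2 ≤ jk.1 + jk.2 then
            ‖f p‖ ^ jk.1 * ‖f (p ^ jk.2)‖
              / (Nat.factorial jk.1 * (p : ℝ) ^ (σ * (jk.1 + jk.2))) else 0)) ∧
      (∑' jk : ℕ × ℕ, (if 2 ≤ jk.1 + jk.2 then
            ‖f p‖ ^ jk.1 * ‖f (p ^ jk.2)‖
              / (Nat.factorial jk.1 * (p : ℝ) ^ (σ * (jk.1 + jk.2))) else 0))
        ≤ C' * (‖f p‖ ^ 2 / (p : ℝ) ^ (2 * σ)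
            + ∑' ν : ℕ, if 2 ≤ ν then ‖f (p ^ ν)‖ / (p : ℝ) ^ (σ * ν) else 0) := by
  intro C hC
  refine ⟨2 * ∑' j : ℕ, (max C 1) ^ j / (Nat.factorial j : ℝ), ?_, ?_⟩
  · have h := Summable.le_tsum (Real.summable_pow_div_factorial (max C 1)) 0 fun i _ => by positivity
    simp only [pow_zero, Nat.factorial_zero, Nat.cast_one, div_one] at h
    linarith
  intro f hf1 σ hσ0 hσ1 p hp hsum hfpC hεC
  have hp0 : (0:ℝ) < p := by exact_mod_cast hp.pos
  have key := my_main_aux (max C 1) (le_max_right _ _)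
    (‖f p‖ / (p:ℝ) ^ σ) (by positivity) (le_trans hfpC (le_max_left _ _))
    (fun k => ‖f (p ^ k)‖ / (p:ℝ) ^ (σ * k))
    (fun k => by positivity) (by simp [hf1]) (by simp) hsum
  have hGrw : ∀ jk : ℕ × ℕ, (if 2 ≤ jk.1 + jk.2 then
        ‖f p‖ ^ jk.1 * ‖f (p ^ jk.2)‖
          / (Nat.factorial jk.1 * (p : ℝ) ^ (σ * (jk.1 + jk.2))) else 0)
      = (if 2 ≤ jk.1 + jk.2 then
          (‖f p‖ / (p:ℝ) ^ σ) ^ jk.1 / (Nat.factorial jk.1 : ℝ)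
            * (‖f (p ^ jk.2)‖ / (p:ℝ) ^ (σ * jk.2)) else 0) := by
    rintro ⟨j, k⟩
    dsimp only
    split
    · have e1 : (p:ℝ) ^ (σ * ((j : ℝ) + (k : ℝ)))
          = ((p:ℝ) ^ σ) ^ j * ((p:ℝ) ^ (σ * (k : ℝ))) := by
        rw [show σ * ((j:ℝ) + (k:ℝ)) = σ * (j:ℝ) + σ * (k:ℝ) by ring,
          Real.rpow_add hp0, Real.rpow_mul hp0.le, Real.rpow_natCast]
      rw [e1, div_pow]
      ring
    · rfl
  have hGs' : Summable (fun jk : ℕ × ℕ => if 2 ≤ jk.1 + jk.2 then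
      ‖f p‖ ^ jk.1 * ‖f (p ^ jk.2)‖
        / (Nat.factorial jk.1 * (p : ℝ) ^ (σ * (jk.1 + jk.2))) else 0) :=
    key.1.congr fun jk => (hGrw jk).symm
  constructor
  · -- part 1
    have hM := my_summable_antidiag hGs'
    have hMeq := my_tsum_antidiag hGs'
    have hLM : ∀ ν : ℕ, (if 2 ≤ ν then
        ‖∑ j ∈ Finset.range (ν + 1),
          (-1) ^ j * f p ^ j * f (p ^ (ν - j)) / (Nat.factorial j : ℂ)‖ / (p : ℝ) ^ (σ * ν)
        else 0)
        ≤ ∑ kl ∈ Finset.HasAntidiagonal.antidiagonal ν, (if 2 ≤ kl.1 + kl.2 then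
            ‖f p‖ ^ kl.1 * ‖f (p ^ kl.2)‖
              / (Nat.factorial kl.1 * (p : ℝ) ^ (σ * (kl.1 + kl.2))) else 0) := by
      intro ν
      by_cases hν : 2 ≤ ν
      · rw [if_pos hν, Finset.Nat.sum_antidiagonal_eq_sum_range_succ_mk]
        have step1 : ‖∑ j ∈ Finset.range (ν + 1),
              (-1) ^ j * f p ^ j * f (p ^ (ν - j)) / (Nat.factorial j : ℂ)‖
            ≤ ∑ j ∈ Finset.range (ν + 1),
              ‖f p‖ ^ j * ‖f (p ^ (ν - j))‖ / (Nat.factorial j : ℝ) := by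
          refine le_trans (norm_sum_le _ _) (le_of_eq ?_)
          refine Finset.sum_congr rfl fun j hj => ?_
          rw [norm_div, norm_mul, norm_mul, norm_pow, norm_pow]
          simp
        calc ‖∑ j ∈ Finset.range (ν + 1),
              (-1) ^ j * f p ^ j * f (p ^ (ν - j)) / (Nat.factorial j : ℂ)‖ / (p : ℝ) ^ (σ * ν)
            ≤ (∑ j ∈ Finset.range (ν + 1),
                ‖f p‖ ^ j * ‖f (p ^ (ν - j))‖
                  / (Nat.factorial j : ℝ)) / (p : ℝ) ^ (σ * ν) := by gcongr
          _ = ∑ j ∈ Finset.range (ν + 1), (if 2 ≤ (j, ν - j).1 + (j, ν - j).2 then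
                ‖f p‖ ^ (j, ν - j).1 * ‖f (p ^ (j, ν - j).2)‖
                  / (Nat.factorial (j, ν - j).1
                    * (p : ℝ) ^ (σ * ((j, ν - j).1 + (j, ν - j).2))) else 0) := by
              rw [Finset.sum_div]
              refine Finset.sum_congr rfl fun j hj => ?_
              rw [Finset.mem_range, Nat.lt_succ_iff] at hj
              have hsub : j + (ν - j) = ν := Nat.add_sub_cancel' hj
              dsimp only
              rw [hsub, show ((j:ℝ) + ((ν - j : ℕ):ℝ)) = (ν:ℝ) from by
                rw [← Nat.cast_add, hsub], if_pos hν, div_div]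
      · rw [if_neg hν]
        apply Finset.sum_nonneg
        intro kl _
        split
        · positivity
        · exact le_refl 0
    have hLs : Summable (fun ν : ℕ => if 2 ≤ ν then
        ‖∑ j ∈ Finset.range (ν + 1),
          (-1) ^ j * f p ^ j * f (p ^ (ν - j)) / (Nat.factorial j : ℂ)‖ / (p : ℝ) ^ (σ * ν)
        else 0) := by
      refine Summable.of_nonneg_of_le (fun ν => ?_) hLM hM
      split
      · positivity
      · exact le_refl 0
    calc (∑' ν : ℕ, if 2 ≤ ν then
          ‖∑ j ∈ Finset.range (ν + 1),
            (-1) ^ j * f p ^ j * f (p ^ (ν - j)) / (Nat.factorial j : ℂ)‖ / (p : ℝ) ^ (σ * ν)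
          else 0)
        ≤ ∑' ν : ℕ, ∑ kl ∈ Finset.HasAntidiagonal.antidiagonal ν, (if 2 ≤ kl.1 + kl.2 then
            ‖f p‖ ^ kl.1 * ‖f (p ^ kl.2)‖
              / (Nat.factorial kl.1 * (p : ℝ) ^ (σ * (kl.1 + kl.2))) else 0) :=
          Summable.tsum_le_tsum hLM hLs hM
      _ = _ := hMeq
  · -- part 2
    rw [tsum_congr hGrw]
    refine le_trans key.2 (le_of_eq ?_)
    have hsq : (‖f p‖ / (p:ℝ) ^ σ) ^ 2
        = ‖f p‖ ^ 2 / (p : ℝ) ^ (2 * σ) := by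
      rw [div_pow, show (2:ℝ) * σ = σ * ((2:ℕ):ℝ) by push_cast; ring,
        Real.rpow_mul hp0.le, Real.rpow_natCast]
    rw [hsq]
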